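/- Let G be a strongly connected digraph with a fixed start vertex s, and let 𝒞 be the family of all bridge-dominated components of G with respect to G_s. Then 𝒞 is laminar: for any two bridge-dominated components C and C', either C ∩ C' = ∅, or C ⊆ C', or C' ⊆ C. -/

import Mathlib

/-!  Basic notions for finite directed graphs given by an edge set `E : Set (V × V)`. -/

variable {V : Type*}

/-- A path from `u` to `v`: a nonempty list of vertices starting at `u`, ending at `v`,
in which every pair of consecutive vertices is an edge. -/
def IsPath (E : Set (V × V)) (u v : V) (p : List V) : Prop :=
  p.Chain' (fun a b => (a, b) ∈ E) ∧ p.head? = some u ∧ p.getLast? = some v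

/-- `v` is reachable from `u` by a path. -/
def Reach (E : Set (V × V)) (u v : V) : Prop := ∃ p, IsPath E u v p

/-- Every vertex reaches every other vertex. -/
def StronglyConnected (E : Set (V × V)) : Prop := ∀ u v, Reach E u v

/-- An edge `e` is a strong bridge if its removal destroys strong connectivity. -/
def StrongBridge (E : Set (V × V)) (e : V × V) : Prop :=
  e ∈ E ∧ ¬ StronglyConnected (E \ {e})

/-- `u` dominates `v` in the flow graph with start vertex `s`:
every path from `s` to `v` contains `u`. -/
def Dominates (E : Set (V × V)) (s u v : V) : Prop :=
  ∀ p, IsPath E s v p → u ∈ p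

/-- An edge `e = (e.1, e.2)` is a bridge of the flow graph `G_s`:
every path from `s` to `e.2` contains the edge `e`. -/
def FlowBridge (E : Set (V × V)) (s : V) (e : V × V) : Prop :=
  e ∈ E ∧ ∀ p, IsPath E s e.2 p → [e.1, e.2] <:+: p

/-- The reverse digraph: all edges reversed. -/
def rev (E : Set (V × V)) : Set (V × V) := {e | (e.2, e.1) ∈ E}

/-- `D(v)`: the set of vertices dominated by `v` in `G_s`. -/
def Dset (E : Set (V × V)) (s v : V) : Set V := {w | Dominates E s v w}

/-- Reachability inside the induced subgraph `G[S]`: a path all of whose vertices lie in `S`. -/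
def ReachableIn (E : Set (V × V)) (S : Set V) (u v : V) : Prop :=
  ∃ p, IsPath E u v p ∧ ∀ w ∈ p, w ∈ S

/-- `C` is a strongly connected component of the induced subgraph `G[S]`. -/
def SCCIn (E : Set (V × V)) (S : Set V) (C : Set V) : Prop :=
  C.Nonempty ∧ C ⊆ S ∧
  (∀ u ∈ C, ∀ v ∈ C, ReachableIn E S u v) ∧
  (∀ v ∈ S, ∀ u ∈ C, ReachableIn E S u v → ReachableIn E S v u → v ∈ C)

/-- A bridge-dominated component: an SCC of `G[D(v)]` for some bridge `(u,v)` of `G_s`. -/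
def BridgeDomComponent (E : Set (V × V)) (s : V) (C : Set V) : Prop :=
  ∃ u v, FlowBridge E s (u, v) ∧ SCCIn E (Dset E s v) C

/-- The set of edges used by a path `p`. -/
def pathEdges (p : List V) : Set (V × V) := {e | [e.1, e.2] <:+: p}

/-- `u` and `v` are `2`-edge-connected: there are two edge-disjoint paths from `u` to `v`
and two edge-disjoint paths from `v` to `u`. -/
def TwoEdgeConnected (E : Set (V × V)) (u v : V) : Prop :=
  (∃ p q, IsPath E u v p ∧ IsPath E u v q ∧ pathEdges p ∩ pathEdges q = ∅) ∧
  (∃ p q, IsPath E v u p ∧ IsPath E v u q ∧ pathEdges p ∩ pathEdges q = ∅)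

/-- `u` is the immediate dominator of `v` in `G_s`: a proper dominator of `v`
dominated by every proper dominator of `v`. -/
def ImmDom (E : Set (V × V)) (s u v : V) : Prop :=
  Dominates E s u v ∧ u ≠ v ∧
  ∀ w, Dominates E s w v → w ≠ v → Dominates E s w u

/-- `depth v = |Dom(v)|`, the number of dominators of `v` in `G_s`. -/
noncomputable def depth (E : Set (V × V)) (s v : V) : ℕ :=
  {u | Dominates E s u v}.ncard

/-- `z` is the nearest common ancestor of `x` and `y` in the dominator tree of `G_s`:
a common dominator of `x` and `y` dominated by every common dominator. -/
def IsNCA (E : Set (V × V)) (s x y z : V) : Prop :=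
  Dominates E s z x ∧ Dominates E s z y ∧
  ∀ w, Dominates E s w x → Dominates E s w y → Dominates E s w z

/-- `r` is the bridge-decomposition root of `v` in `G_s`: the deepest dominator `r`
of `v` such that `r = s` or `(d(r), r)` is a bridge of `G_s`. -/
def IsBDRoot (E : Set (V × V)) (s v r : V) : Prop :=
  Dominates E s r v ∧
  (r = s ∨ ∃ u, ImmDom E s u r ∧ FlowBridge E s (u, r)) ∧
  ∀ r', Dominates E s r' v →
    (r' = s ∨ ∃ u', ImmDom E s u' r' ∧ FlowBridge E s (u', r')) →
    Dominates E s r' r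


section Aux
variable {V : Type*}

lemma mem_of_getLast? {p : List V} {v : V} (h : p.getLast? = some v) : v ∈ p := by
  cases p with
  | nil => simp at h
  | cons a t =>
    have := List.getLast?_eq_getLast (show a :: t ≠ [] by simp)
    rw [this] at h
    injection h with h
    exact h ▸ List.getLast_mem _

lemma mem_of_head? {p : List V} {v : V} (h : p.head? = some v) : v ∈ p := by
  cases p with
  | nil => simp at h
  | cons a t => simp at h; simp [h]

lemma path_concat {E : Set (V × V)} {a b c : V} {p q : List V}
    (hp : IsPath E a b p) (hq : IsPath E b c q) :
    ∃ r, IsPath E a c r ∧ ∀ w ∈ r, w ∈ p ∨ w ∈ q := by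
  obtain ⟨hc1, hh1, hl1⟩ := hp
  obtain ⟨hc2, hh2, hl2⟩ := hq
  obtain ⟨t, rfl⟩ : ∃ t, q = b :: t := by
    cases q with
    | nil => simp at hh2
    | cons x t => simp at hh2; exact ⟨t, by rw [hh2]⟩
  refine ⟨p ++ t, ⟨?_, ?_, ?_⟩, ?_⟩
  · refine hc1.append (hc2.tail) ?_
    intro x hx y hy
    rw [hl1] at hx
    injection hx with hx
    subst hx
    cases t with
    | nil => simp at hy
    | cons z t' =>
      simp at hy
      subst hy
      exact (List.isChain_cons_cons.1 hc2).1
  · cases p with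
    | nil => simp at hh1
    | cons _ _ => simpa using hh1
  · cases t with
    | nil =>
      simp only [List.append_nil]
      rw [hl1]
      simpa using hl2
    | cons z t' =>
      rw [List.getLast?_append_of_ne_nil _ (by simp)]
      simp only [List.getLast?_cons_cons] at hl2
      exact hl2
  · intro w hw
    rcases List.mem_append.1 hw with h | h
    · exact Or.inl h
    · exact Or.inr (List.mem_cons_of_mem _ h)

/-- first-occurrence prefix path -/
lemma path_prefix {E : Set (V × V)} {s x v : V} {p : List V}
    (hp : IsPath E s x p) (hv : v ∈ p) :
    ∃ q, IsPath E s v q ∧ ∀ w ∈ q, w ∈ p := by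
  obtain ⟨p₁, p₂, rfl⟩ := List.append_of_mem hv
  obtain ⟨hc, hh, _⟩ := hp
  refine ⟨p₁ ++ [v], ⟨?_, ?_, ?_⟩, ?_⟩
  · exact hc.prefix ⟨p₂, by simp⟩
  · cases p₁ with
    | nil => simpa using hh
    | cons a t => simpa using hh
  · simp
  · intro w hw
    simp only [List.mem_append, List.mem_singleton, List.mem_cons] at hw ⊢
    tauto

/-- last occurrence of an element of `P` in `p` -/
lemma last_occ {P : Set V} {p : List V} (h : ∃ a ∈ p, a ∈ P) :
    ∃ p₁ a p₂, p = p₁ ++ a :: p₂ ∧ a ∈ P ∧ ∀ b ∈ p₂, b ∉ P := by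
  induction p with
  | nil => simp at h
  | cons hd tl ih =>
    by_cases htl : ∃ a ∈ tl, a ∈ P
    · obtain ⟨p₁, a, p₂, heq, ha, hp₂⟩ := ih htl
      exact ⟨hd :: p₁, a, p₂, by rw [heq]; rfl, ha, hp₂⟩
    · obtain ⟨a, ha, haP⟩ := h
      rcases List.mem_cons.1 ha with rfl | ha'
      · exact ⟨[], a, tl, rfl, haP, fun b hb hbP => htl ⟨b, hb, hbP⟩⟩
      · exact absurd ⟨a, ha', haP⟩ htl

lemma suffix_path {E : Set (V × V)} {s x a : V} {p₁ p₂ : List V}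
    (hp : IsPath E s x (p₁ ++ a :: p₂)) : IsPath E a x (a :: p₂) := by
  obtain ⟨hc, _, hl⟩ := hp
  refine ⟨hc.suffix ⟨p₁, rfl⟩, rfl, ?_⟩
  rwa [List.getLast?_append_of_ne_nil _ (by simp)] at hl

lemma dom_refl (E : Set (V × V)) (s v : V) : Dominates E s v v :=
  fun p hp => mem_of_getLast? hp.2.2

/-- dominators of a reachable vertex are totally ordered -/
lemma dom_total {E : Set (V × V)} {s x v v' : V} (hr : Reach E s x)
    (h1 : Dominates E s v x) (h2 : Dominates E s v' x) :
    Dominates E s v v' ∨ Dominates E s v' v := by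
  by_cases hvv : v = v'
  · exact Or.inl (hvv ▸ dom_refl E s v)
  by_contra hcon
  push_neg at hcon
  obtain ⟨hnd1, hnd2⟩ := hcon
  rw [Dominates] at hnd1 hnd2
  push_neg at hnd1 hnd2
  obtain ⟨p, hp⟩ := hr
  obtain ⟨p₁, a, p₂, heq, haP, hp₂⟩ :=
    last_occ (P := ({v, v'} : Set V)) ⟨v, h1 p hp, Or.inl rfl⟩
  subst heq
  have hsuf := suffix_path hp
  simp only [Set.mem_insert_iff, Set.mem_singleton_iff] at haP
  rcases haP with rfl | rfl
  · obtain ⟨A, hA, hAv⟩ := hnd2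
    obtain ⟨r, hr', hmem⟩ := path_concat hA hsuf
    rcases hmem v' (h2 r hr') with h | h
    · exact hAv h
    · rcases List.mem_cons.1 h with h | h
      · exact hvv h.symm
      · exact hp₂ v' h (Or.inr rfl)
  · obtain ⟨A, hA, hAv⟩ := hnd1
    obtain ⟨r, hr', hmem⟩ := path_concat hA hsuf
    rcases hmem v (h1 r hr') with h | h
    · exact hAv h
    · rcases List.mem_cons.1 h with h | h
      · exact hvv h
      · exact hp₂ v h (Or.inl rfl)

lemma dset_mono {E : Set (V × V)} {s v v' : V} (h : Dominates E s v v') :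
    Dset E s v' ⊆ Dset E s v := by
  intro w hw p hp
  have hv' : v' ∈ p := hw p hp
  obtain ⟨q, hq, hsub⟩ := path_prefix hp hv'
  exact hsub v (h q hq)

lemma reachableIn_mono {E : Set (V × V)} {S S' : Set V} {u v : V}
    (hSS : S ⊆ S') (h : ReachableIn E S u v) : ReachableIn E S' u v := by
  obtain ⟨p, hp, hmem⟩ := h
  exact ⟨p, hp, fun w hw => hSS (hmem w hw)⟩

lemma scc_subset {E : Set (V × V)} {S S' C C' : Set V} {x : V}
    (hSS : S' ⊆ S) (hC : SCCIn E S C) (hC' : SCCIn E S' C')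
    (hx : x ∈ C) (hx' : x ∈ C') : C' ⊆ C := by
  intro y hy
  obtain ⟨_, hsub', hconn', _⟩ := hC'
  obtain ⟨_, _, _, hmax⟩ := hC
  exact hmax y (hSS (hsub' hy)) x hx
    (reachableIn_mono hSS (hconn' x hx' y hy))
    (reachableIn_mono hSS (hconn' y hy x hx'))

end Aux

/-- the family of bridge-dominated components is laminar. -/
theorem stmt3 {V : Type*} (E : Set (V × V)) (s : V)
    (hSC : StronglyConnected E) (C C' : Set V)
    (hC : BridgeDomComponent E s C) (hC' : BridgeDomComponent E s C') :
    C ∩ C' = ∅ ∨ C ⊆ C' ∨ C' ⊆ C := by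
  by_cases hint : C ∩ C' = ∅
  · exact Or.inl hint
  right
  obtain ⟨x, hxC, hxC'⟩ := Set.nonempty_iff_ne_empty.2 hint
  obtain ⟨u, v, hb, hscc⟩ := hC
  obtain ⟨u', v', hb', hscc'⟩ := hC'
  have hxv : Dominates E s v x := hscc.2.1 hxC
  have hxv' : Dominates E s v' x := hscc'.2.1 hxC'
  rcases dom_total (hSC s x) hxv hxv' with hd | hd
  · exact Or.inr (scc_subset (dset_mono hd) hscc hscc' hxC hxC')
  · exact Or.inl (scc_subset (dset_mono hd) hscc' hscc hxC' hxC)
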